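/- Let p > 3 be a prime and set p' = (p-1)/2. Then C(p-1, p') times the sum over a from p' to p-1 of C(a, p')^2 is congruent to 1 modulo p^2. -/

import Mathlib

open Finset

def Oz (p k : ℕ) : ZMod (p^2) := ∑ j ∈ range k, ((2*j+1 : ℕ) : ZMod (p^2))⁻¹
def OF (p k : ℕ) : ZMod p := ∑ j ∈ range k, ((2*j+1 : ℕ) : ZMod p)⁻¹
def HF (p k : ℕ) : ZMod p := ∑ i ∈ range k, ((i+1 : ℕ) : ZMod p)⁻¹

lemma st15_unitR (p a : ℕ) (hp : p.Prime) (h1 : 0 < a) (h2 : a < p) :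
    IsUnit ((a : ℕ) : ZMod (p^2)) := by
  rw [ZMod.isUnit_iff_coprime]
  exact Nat.Coprime.pow_right 2 ((Nat.coprime_of_lt_prime h1.ne' h2 hp).symm)

lemma st15_unitF (p a : ℕ) (hp : p.Prime) (h1 : 0 < a) (h2 : a < p) :
    ((a : ℕ) : ZMod p) ≠ 0 := by
  rw [Ne, ZMod.natCast_eq_zero_iff]
  exact fun h => absurd (Nat.le_of_dvd h1 h) (not_le.mpr h2)

lemma st15_key0 (p : ℕ) (hp : p.Prime) (z : ZMod (p^2)) :
    (p : ZMod (p^2)) * z = 0 ↔ ZMod.castHom (dvd_pow_self p two_ne_zero) (ZMod p) z = 0 := by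
  have h2 : (0:ℕ) < p ^ 2 := pow_pos hp.pos 2
  haveI : NeZero (p^2) := ⟨h2.ne'⟩
  obtain ⟨a, rfl⟩ := (ZMod.natCast_rightInverse (n := p^2)).surjective z
  rw [map_natCast, ← Nat.cast_mul, ZMod.natCast_eq_zero_iff,
    ZMod.natCast_eq_zero_iff, pow_two]
  exact mul_dvd_mul_iff_left (a := p) (by exact_mod_cast hp.pos.ne') |>.trans Iff.rfl
  

lemma st15_invTrans (p n : ℕ) (hp : p.Prime) (h1 : 0 < n) (h2 : n < p) :
    ZMod.castHom (dvd_pow_self p two_ne_zero) (ZMod p) (((n : ℕ) : ZMod (p^2))⁻¹)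
      = ((n : ℕ) : ZMod p)⁻¹ := by
  haveI : Fact p.Prime := ⟨hp⟩
  have hu := ZMod.mul_inv_of_unit _ (st15_unitR p n hp h1 h2)
  have := congrArg (ZMod.castHom (dvd_pow_self p two_ne_zero) (ZMod p)) hu
  rw [map_mul, map_one, map_natCast] at this
  exact eq_inv_of_mul_eq_one_right this

lemma st15_L1 (p m : ℕ) (hp : p.Prime) (hm : p = 2*m+1) :
    ∀ k, k ≤ m → (((m+k).choose k : ℕ) : ZMod (p^2)) =
      (-1)^k * ((m.choose k : ℕ) : ZMod (p^2)) * (1 + 2*(p : ZMod (p^2)) * Oz p k) := by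
  intro k
  induction k with
  | zero => simp [Oz]
  | succ k ih =>
    intro hk1
    have hkm : k ≤ m := le_trans (Nat.le_succ k) hk1
    have IH := ih (le_trans (Nat.le_succ k) hk1)
    set R := ZMod (p^2)
    set q : R := (p : R) with hqdef
    have hqm : q = 2*(m:R)+1 := by
      have := congrArg (Nat.cast : ℕ → R) hm; push_cast [R] at this; exact this
    have hq : q * q = 0 := by
      have h0 : ((p^2 : ℕ) : R) = 0 := ZMod.natCast_self _
      push_cast at h0
      linear_combination h0
    have h2u : IsUnit (2 : R) := by
      have := st15_unitR p 2 hp (by norm_num) (by omega); simpa using this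
    have hKu : IsUnit ((k+1 : ℕ) : R) := st15_unitR p (k+1) hp (by omega) (by omega)
    have hTu : IsUnit ((2*k+1 : ℕ) : R) := st15_unitR p (2*k+1) hp (by omega) (by omega)
    set w : R := ((2*k+1 : ℕ) : R)⁻¹ with hwdef
    have hw : ((2*k+1 : ℕ) : R) * w = 1 := ZMod.mul_inv_of_unit _ hTu
    have hO : Oz p (k+1) = Oz p k + w := by rw [Oz, sum_range_succ]; rfl
    have f1 : (m+k+1) * ((m+k).choose k) = (m+k+1).choose (k+1) * (k+1) :=
      Nat.add_one_mul_choose_eq (m+k) k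
    have f2 : m.choose (k+1) * (k+1) = m.choose k * (m - k) := Nat.choose_succ_right_eq m k
    have e1 : ((m:R)+k+1) * ((m+k).choose k : ℕ) = (((m+k+1).choose (k+1) : ℕ) : R) * ((k:R)+1) := by
      have := congrArg (Nat.cast : ℕ → R) f1; push_cast [R] at this; exact this
    have e2 : ((m.choose (k+1) : ℕ) : R) * ((k:R)+1) = ((m.choose k : ℕ) : R) * ((m:R) - k) := by
      have := congrArg (Nat.cast : ℕ → R) f2
      push_cast [R, Nat.cast_sub hkm] at this; exact this
    rw [hO]
    set C1 : R := (((m+k).choose k : ℕ) : R)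
    set C2 : R := (((m+k+1).choose (k+1) : ℕ) : R)
    set B1 : R := ((m.choose k : ℕ) : R)
    set B2 : R := ((m.choose (k+1) : ℕ) : R)
    set Ok : R := Oz p k
    have hmain : ((2:R)*((2*k+1:ℕ):R)*((k+1:ℕ):R)) * C2
        = ((2:R)*((2*k+1:ℕ):R)*((k+1:ℕ):R)) * ((-1)^(k+1) * B2 * (1 + 2*q*(Ok + w))) := by
      have hs : ((-1:R))^(k+1) = (-1)^k * (-1) := pow_succ _ _
      rw [hs]
      push_cast [R]
      linear_combination (-2*((2:R)*(k:R)+1))*e1 + (((2:R)*(k:R)+1)*C1)*(by rw[hqm]; ring : (2:R)*((m:R)+(k:R)+1) = q + (2*(k:R)+1))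
        + (((2:R)*(k:R)+1)*(q+(2*(k:R)+1)))*IH
        + (2*((2:R)*(k:R)+1)*((-1:R))^k*(1+2*q*Ok+2*q*w))*e2
        + (((-1:R))^k*B1*((2:R)*(k:R)+1)*(1+2*q*Ok+2*q*w))*(by rw[hqm]; ring : (2:R)*((m:R)-(k:R)) + (2*(k:R)+1) = q)
        + (((-1:R))^k*B1*2*q*(q-(2*(k:R)+1)))*(by push_cast [R] at hw; exact hw : ((2:R)*(k:R)+1) * w = 1)
        + (((-1:R))^k*B1*(4*((2:R)*(k:R)+1)*Ok+2))*hq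
    have hu : IsUnit ((2:R)*((2*k+1:ℕ):R)*((k+1:ℕ):R)) := (h2u.mul hTu).mul hKu
    have := hu.mul_left_cancel hmain
    convert this using 2
    rw [Nat.add_assoc]

lemma st15_Lgen (p a : ℕ) (hp : p.Prime) (ha : a < p) :
    ∀ k, k ≤ a → (((a+p).choose k : ℕ) : ZMod (p^2)) =
      ((a.choose k : ℕ) : ZMod (p^2)) *
        (1 + (p : ZMod (p^2)) * ∑ i ∈ range k, ((a-i : ℕ) : ZMod (p^2))⁻¹) := by
  intro k
  induction k with
  | zero => simp
  | succ k ih =>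
    intro hk1
    have hka : k ≤ a := le_trans (Nat.le_succ k) hk1
    have IH := ih hka
    set R := ZMod (p^2)
    have hq : (p:R) * (p:R) = 0 := by
      have h0 : ((p^2 : ℕ) : R) = 0 := ZMod.natCast_self _
      push_cast at h0
      linear_combination h0
    have hKu : IsUnit ((k+1 : ℕ) : R) := st15_unitR p (k+1) hp (by omega) (by omega)
    have hDu : IsUnit ((a-k : ℕ) : R) := st15_unitR p (a-k) hp (by omega) (by omega)
    set v : R := ((a-k : ℕ) : R)⁻¹ with hvdef
    have hv : ((a-k : ℕ) : R) * v = 1 := ZMod.mul_inv_of_unit _ hDu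
    have hA : (∑ i ∈ range (k+1), ((a-i : ℕ) : R)⁻¹) = (∑ i ∈ range k, ((a-i : ℕ) : R)⁻¹) + v := by
      rw [sum_range_succ]
    have g1 : (a+p).choose (k+1) * (k+1) = (a+p).choose k * (a+p-k) := Nat.choose_succ_right_eq _ _
    have g2 : a.choose (k+1) * (k+1) = a.choose k * (a-k) := Nat.choose_succ_right_eq _ _
    have f3 : a+p-k = (a-k)+p := by omega
    rw [f3] at g1
    have e1 : (((a+p).choose (k+1) : ℕ) : R) * ((k:R)+1)
        = (((a+p).choose k : ℕ) : R) * (((a-k : ℕ):R) + (p:R)) := by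
      have := congrArg (Nat.cast : ℕ → R) g1; push_cast [R] at this; exact this
    have e2 : ((a.choose (k+1) : ℕ) : R) * ((k:R)+1) = ((a.choose k : ℕ) : R) * ((a-k:ℕ):R) := by
      have := congrArg (Nat.cast : ℕ → R) g2; push_cast [R] at this; exact this
    rw [hA]
    set C2 : R := (((a+p).choose (k+1) : ℕ) : R)
    set C1 : R := (((a+p).choose k : ℕ) : R)
    set B2 : R := ((a.choose (k+1) : ℕ) : R)
    set B1 : R := ((a.choose k : ℕ) : R)
    set A : R := ∑ i ∈ range k, ((a-i : ℕ) : R)⁻¹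
    set D : R := ((a-k : ℕ) : R)
    have hmain : ((k+1:ℕ):R) * C2 = ((k+1:ℕ):R) * (B2 * (1 + (p:R) * (A + v))) := by
      push_cast
      linear_combination e1 + (D+(p:R))*IH + (-(1+(p:R)*A+(p:R)*v))*e2 + (B1*A)*hq + (-(B1*(p:R)))*hv
    exact hKu.mul_left_cancel hmain

lemma st15_sumsplit {M : Type*} [AddCommMonoid M] (f : ℕ → M) (a b : ℕ) :
    ∑ i ∈ range (a+b), f i = (∑ i ∈ range a, f i) + ∑ i ∈ range b, f (a+i) := by
  induction b with
  | zero => simp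
  | succ b ih => rw [← Nat.add_assoc, sum_range_succ, ih, sum_range_succ, add_assoc]

lemma st15_parity {M : Type*} [AddCommMonoid M] (f : ℕ → M) (n : ℕ) :
    ∑ i ∈ range (2*n), f i = (∑ j ∈ range n, f (2*j)) + ∑ j ∈ range n, f (2*j+1) := by
  induction n with
  | zero => simp
  | succ n ih =>
    rw [show 2*(n+1) = (2*n)+1+1 from (by ring), sum_range_succ, sum_range_succ, ih,
      sum_range_succ, sum_range_succ]
    abel

lemma st15_neg_cast (p a : ℕ) (h : a ≤ p) : ((p - a : ℕ) : ZMod p) = - (a : ZMod p) := by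
  rw [Nat.cast_sub h, ZMod.natCast_self, zero_sub]

-- H_{p-1} = 0

lemma st15_H0 (p : ℕ) (hp : p.Prime) (hp3 : 3 < p) : HF p (p-1) = 0 := by
  haveI : Fact p.Prime := ⟨hp⟩
  have hrefl := Finset.sum_range_reflect (fun i => ((i+1 : ℕ) : ZMod p)⁻¹) (p-1)
  have hterm : ∀ i ∈ range (p-1), ((p-1-1-i+1 : ℕ) : ZMod p)⁻¹ = -((i+1 : ℕ) : ZMod p)⁻¹ := by
    intro i hi
    rw [mem_range] at hi
    have h1 : p-1-1-i+1 = p - (i+1) := by omega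
    rw [h1, st15_neg_cast p (i+1) (by omega), inv_neg]
  rw [Finset.sum_congr rfl hterm, Finset.sum_neg_distrib] at hrefl
  have h2 : (2 : ZMod p) * HF p (p-1) = 0 := by
    rw [HF]
    linear_combination (-1 : ZMod p) * hrefl
  have h2u : (2 : ZMod p) ≠ 0 := by
    intro h
    have h' : ((2:ℕ) : ZMod p) = 0 := by exact_mod_cast h
    rw [ZMod.natCast_eq_zero_iff] at h'
    exact absurd (Nat.le_of_dvd (by norm_num) h') (by omega)
  exact (mul_eq_zero.mp h2).resolve_left h2u

-- O_m + H_m/2 = H_{2m}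

lemma st15_OH (p m : ℕ) (hp : p.Prime) :
    HF p (2*m) = OF p m + (2 : ZMod p)⁻¹ * HF p m := by
  haveI : Fact p.Prime := ⟨hp⟩
  rw [HF, st15_parity (fun i => ((i+1 : ℕ) : ZMod p)⁻¹) m, OF, HF]
  congr 1
  rw [Finset.mul_sum]
  refine Finset.sum_congr rfl fun j hj => ?_
  have : ((2*j+1+1 : ℕ) : ZMod p) = 2 * ((j+1 : ℕ) : ZMod p) := by push_cast; ring
  rw [this, mul_inv]

-- O_{m-k} = O_m + H_k/2

lemma st15_Orefl (p m k : ℕ) (hp : p.Prime) (hm : p = 2*m+1) (hk : k ≤ m) :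
    OF p (m-k) = OF p m + (2 : ZMod p)⁻¹ * HF p k := by
  haveI : Fact p.Prime := ⟨hp⟩
  have hsplit := st15_sumsplit (fun j => ((2*j+1 : ℕ) : ZMod p)⁻¹) (m-k) k
  rw [show m-k+k = m from (by omega)] at hsplit
  have hterm : ∀ i ∈ range k, ((2*(m-k+i)+1 : ℕ) : ZMod p)⁻¹
      = -((2:ZMod p))⁻¹ * ((k-i : ℕ) : ZMod p)⁻¹ := by
    intro i hi
    rw [mem_range] at hi
    have h1 : 2*(m-k+i)+1 = p - 2*(k-i) := by omega
    rw [h1, st15_neg_cast p (2*(k-i)) (by omega)]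
    have : ((2*(k-i) : ℕ) : ZMod p) = 2 * ((k-i : ℕ) : ZMod p) := by push_cast; ring
    rw [this, inv_neg, mul_inv, neg_mul]
  rw [Finset.sum_congr rfl hterm] at hsplit
  have hrefl : ∑ i ∈ range k, ((k-i : ℕ) : ZMod p)⁻¹ = HF p k := by
    rw [HF]
    rw [← Finset.sum_range_reflect (fun i => ((i+1 : ℕ) : ZMod p)⁻¹) k]
    refine Finset.sum_congr rfl fun i hi => ?_
    rw [mem_range] at hi
    congr 2
    omega
  rw [← Finset.mul_sum, hrefl] at hsplit
  -- hsplit : OF p m = OF p (m-k) + (-(2⁻¹) * HF p k)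
  simp only [OF]
  linear_combination -hsplit

lemma st15_A (p m k : ℕ) (hk : k ≤ m) :
    ∑ i ∈ range k, ((m-i : ℕ) : ZMod p)⁻¹ = HF p m - HF p (m-k) := by
  have hsplit := st15_sumsplit (fun i => ((i+1 : ℕ) : ZMod p)⁻¹) (m-k) k
  rw [show m-k+k = m from (by omega)] at hsplit
  have hrefl : ∑ i ∈ range k, ((m-i : ℕ) : ZMod p)⁻¹
      = ∑ i ∈ range k, ((m-k+i+1 : ℕ) : ZMod p)⁻¹ := by
    rw [← Finset.sum_range_reflect (fun i => ((m-i : ℕ) : ZMod p)⁻¹) k]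
    refine Finset.sum_congr rfl fun i hi => ?_
    rw [mem_range] at hi
    congr 2
    omega
  rw [hrefl, HF, HF]
  linear_combination -hsplit

-- Vandermonde

lemma st15_vdm (a b : ℕ) :
    (a+b).choose b = ∑ k ∈ range (b+1), a.choose k * b.choose (b-k) := by
  rw [Nat.add_choose_eq]
  exact Finset.Nat.sum_antidiagonal_eq_sum_range_succ_mk _ b

-- the derivative identity mod p

lemma st15_deriv (p m : ℕ) (hp : p.Prime) (hm : p = 2*m+1) :
    ∑ k ∈ range (m+1), (((m.choose k : ℕ) : ZMod p))^2 * (HF p m - HF p (m-k))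
      = (((2*m).choose m : ℕ) : ZMod p) * (HF p (2*m) - HF p m) := by
  haveI : Fact p.Prime := ⟨hp⟩
  set R := ZMod (p^2)
  set F := ZMod p
  set φ := ZMod.castHom (dvd_pow_self p two_ne_zero) (ZMod p) with hφ
  have hq : ∀ z : R, (p : R) * z = 0 ↔ φ z = 0 := st15_key0 p hp
  set A : ℕ → R := fun k => ∑ i ∈ range k, ((m-i : ℕ) : R)⁻¹ with hA
  set B : R := ∑ i ∈ range m, ((2*m-i : ℕ) : R)⁻¹ with hB
  -- Vandermonde in R, p-shifted
  have v1 : (((m+p)+m).choose m : ℕ) = ∑ k ∈ range (m+1), (m+p).choose k * m.choose (m-k) :=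
    st15_vdm (m+p) m
  have v2 : ((m+m).choose m : ℕ) = ∑ k ∈ range (m+1), m.choose k * m.choose (m-k) :=
    st15_vdm m m
  have hmp : m < p := by omega
  have h2mp : 2*m < p := by omega
  have e5 : (∑ k ∈ range (m+1), (((m+p).choose k : ℕ) : R) * ((m.choose (m-k) : ℕ) : R))
      = (∑ k ∈ range (m+1), ((m.choose k : ℕ) : R) * ((m.choose (m-k) : ℕ) : R))
        + (p : R) * ∑ k ∈ range (m+1), ((m.choose k : ℕ) : R) * ((m.choose (m-k) : ℕ) : R) * A k := by
    rw [Finset.mul_sum, ← Finset.sum_add_distrib]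
    refine Finset.sum_congr rfl fun k hk => ?_
    rw [mem_range] at hk
    rw [st15_Lgen p m hp hmp k (by omega)]
    ring
  have e6 : ((2*m+p).choose m : R) = (((2*m).choose m : ℕ) : R) * (1 + (p:R) * B) := by
    rw [st15_Lgen p (2*m) hp h2mp m (by omega)]
  have e7 : (p : R) * (∑ k ∈ range (m+1), ((m.choose k : ℕ) : R) * ((m.choose (m-k) : ℕ) : R) * A k
      - (((2*m).choose m : ℕ) : R) * B) = 0 := by
    rw [show m+p+m = 2*m+p from (by omega)] at v1
    rw [show m+m = 2*m from (by omega)] at v2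
    have c2 := congrArg (Nat.cast : ℕ → R) v1
    have c3 := congrArg (Nat.cast : ℕ → R) v2
    push_cast [R] at c2 c3
    rw [e6] at c2
    linear_combination (-1 : R)*c2 - e5 + c3
  rw [hq] at e7
  rw [map_sub, map_sum] at e7
  have e8 : ∀ k ∈ range (m+1), φ (((m.choose k : ℕ) : R) * ((m.choose (m-k) : ℕ) : R) * A k)
      = ((m.choose k : ℕ) : F)^2 * (HF p m - HF p (m-k)) := by
    intro k hk
    rw [mem_range] at hk
    rw [map_mul, map_mul, map_natCast, map_natCast, hA, map_sum]
    have : ∀ i ∈ range k, φ (((m-i : ℕ) : R)⁻¹) = ((m-i : ℕ) : F)⁻¹ := fun i hi => by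
      rw [mem_range] at hi
      exact st15_invTrans p (m-i) hp (by omega) (by omega)
    rw [Finset.sum_congr rfl this, st15_A p m k (by omega), Nat.choose_symm (by omega : k ≤ m)]
    ring
  rw [Finset.sum_congr rfl e8] at e7
  have e9 : φ ((((2*m).choose m : ℕ) : R) * B) = (((2*m).choose m : ℕ) : F) * (HF p (2*m) - HF p m) := by
    rw [map_mul, map_natCast, hB, map_sum]
    have : ∀ i ∈ range m, φ (((2*m-i : ℕ) : R)⁻¹) = ((2*m-i : ℕ) : F)⁻¹ := fun i hi => by
      rw [mem_range] at hi
      exact st15_invTrans p (2*m-i) hp (by omega) (by omega)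
    rw [Finset.sum_congr rfl this, st15_A p (2*m) m (by omega), show 2*m-m = m from (by omega)]
  rw [e9] at e7
  linear_combination e7

lemma st15_vdm3 (m : ℕ) : ∑ k ∈ range (m+1), (m.choose k)^2 = (2*m).choose m := by
  rw [show (2*m).choose m = (m+m).choose m from (by rw [two_mul]), st15_vdm m m]
  refine Finset.sum_congr rfl fun k hk => ?_
  rw [mem_range] at hk
  rw [Nat.choose_symm (by omega : k ≤ m), pow_two]

-- φ of Oz

lemma st15_phiO (p m : ℕ) (hp : p.Prime) (hm : p = 2*m+1) :
    ∀ k, k ≤ m → ZMod.castHom (dvd_pow_self p two_ne_zero) (ZMod p) (Oz p k) = OF p k := by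
  intro k hk
  rw [Oz, map_sum, OF]
  refine Finset.sum_congr rfl fun j hj => ?_
  rw [mem_range] at hj
  exact st15_invTrans p (2*j+1) hp (by omega) (by omega)

-- C(2m,m) ≡ (-1)^m mod p

lemma st15_Cm (p m : ℕ) (hp : p.Prime) (hm : p = 2*m+1) :
    (((2*m).choose m : ℕ) : ZMod p) = (-1)^m := by
  have h := st15_L1 p m hp hm m le_rfl
  have := congrArg (ZMod.castHom (dvd_pow_self p two_ne_zero) (ZMod p)) h
  rw [map_natCast, map_mul, map_mul, map_pow, map_neg, map_one, map_natCast,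
    map_add, map_one, map_mul, map_mul, map_natCast, st15_phiO p m hp hm m le_rfl] at this
  rw [show (2*m).choose m = (m+m).choose m from (by rw [two_mul])]
  rw [this, Nat.choose_self, ZMod.natCast_self]
  push_cast
  ring

-- final mod-p fact

lemma st15_F7 (p m : ℕ) (hp : p.Prime) (hm : p = 2*m+1) (hp3 : 3 < p) :
    OF p m + (-1 : ZMod p)^m * (∑ k ∈ range (m+1), ((m.choose k : ℕ) : ZMod p)^2 * OF p k) = 0 := by
  haveI : Fact p.Prime := ⟨hp⟩
  set F := ZMod p
  have hH0 : HF p (2*m) = 0 := by rw [show 2*m = p-1 from (by omega)]; exact st15_H0 p hp hp3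
  have hOm : OF p m = -((2:F)⁻¹ * HF p m) := by
    have := st15_OH p m hp
    rw [hH0] at this
    linear_combination -this
  set W : F := ∑ k ∈ range (m+1), ((m.choose k : ℕ) : F)^2 * HF p k with hW
  set T : F := ∑ k ∈ range (m+1), ((m.choose k : ℕ) : F)^2 * OF p k with hT
  have hCsum : (∑ k ∈ range (m+1), ((m.choose k : ℕ) : F)^2) = (((2*m).choose m : ℕ) : F) := by
    rw [← st15_vdm3 m]
    push_cast [F]
    rfl
  have hCm := st15_Cm p m hp hm
  -- reflect T
  have hTrefl : T = (((2*m).choose m : ℕ) : F) * OF p m + (2:F)⁻¹ * W := by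
    rw [hT, ← Finset.sum_range_reflect (fun k => ((m.choose k : ℕ) : F)^2 * OF p k) (m+1)]
    have : ∀ k ∈ range (m+1), ((m.choose (m+1-1-k) : ℕ) : F)^2 * OF p (m+1-1-k)
        = ((m.choose k : ℕ) : F)^2 * (OF p m + (2:F)⁻¹ * HF p k) := by
      intro k hk
      rw [mem_range] at hk
      rw [show m+1-1-k = m-k from (by omega), Nat.choose_symm (by omega : k ≤ m),
        st15_Orefl p m k hp hm (by omega)]
    rw [Finset.sum_congr rfl this]
    simp only [mul_add]
    rw [Finset.sum_add_distrib, ← Finset.sum_mul, hCsum]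
    congr 1
    rw [hW, Finset.mul_sum]
    refine Finset.sum_congr rfl fun k hk => ?_
    ring
  -- reflect W inside deriv
  have hWrefl : (∑ k ∈ range (m+1), ((m.choose k : ℕ) : F)^2 * HF p (m-k)) = W := by
    rw [hW, ← Finset.sum_range_reflect (fun k => ((m.choose k : ℕ) : F)^2 * HF p (m-k)) (m+1)]
    refine Finset.sum_congr rfl fun k hk => ?_
    rw [mem_range] at hk
    rw [show m+1-1-k = m-k from (by omega), Nat.choose_symm (by omega : k ≤ m),
      show m-(m-k) = k from (by omega)]
  have hderiv := st15_deriv p m hp hm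
  rw [hH0] at hderiv
  have hd2 : (((2*m).choose m : ℕ) : F) * HF p m - W = -((((2*m).choose m : ℕ) : F) * HF p m) := by
    rw [← hWrefl]
    have expand : ∑ k ∈ range (m+1), ((m.choose k : ℕ) : F)^2 * (HF p m - HF p (m-k))
        = (∑ k ∈ range (m+1), ((m.choose k : ℕ) : F)^2) * HF p m
          - ∑ k ∈ range (m+1), ((m.choose k : ℕ) : F)^2 * HF p (m-k) := by
      simp only [mul_sub]
      rw [Finset.sum_sub_distrib, ← Finset.sum_mul]
    rw [expand, hCsum] at hderiv
    linear_combination hderiv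
  -- W = 2 * (-1)^m * HF m
  have hWval : W = 2 * (-1:F)^m * HF p m := by
    rw [hCm] at hd2
    linear_combination -hd2
  have h2ne : (2:F) ≠ 0 := by
    intro h
    have h' : ((2:ℕ) : F) = 0 := by exact_mod_cast h
    rw [ZMod.natCast_eq_zero_iff] at h'
    exact absurd (Nat.le_of_dvd (by norm_num) h') (by omega)
  have h2 : (2:F) * (2:F)⁻¹ = 1 := mul_inv_cancel₀ h2ne
  set s : F := (-1:F)^m with hsdef
  have hs : s * s = 1 := by
    rw [hsdef, ← pow_add, ← two_mul, pow_mul]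
    norm_num
  rw [hTrefl, hCm, hWval, hOm]
  linear_combination ((2:F)⁻¹ * HF p m) * hs

lemma st15_main (p m : ℕ) (hp : p.Prime) (hm : p = 2*m+1) (hp3 : 3 < p) :
    (((2*m).choose m : ℕ) : ZMod (p^2))
      * ∑ k ∈ range (m+1), (((m+k).choose k : ℕ) : ZMod (p^2))^2 = 1 := by
  set R := ZMod (p^2)
  have hq : (p:R) * (p:R) = 0 := by
    have h0 : ((p^2 : ℕ) : R) = 0 := ZMod.natCast_self _
    push_cast at h0
    linear_combination h0
  have hsq : ∀ k ∈ range (m+1), (((m+k).choose k : ℕ) : R)^2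
      = ((m.choose k : ℕ) : R)^2 + 4*(p:R)*(((m.choose k : ℕ) : R)^2 * Oz p k) := by
    intro k hk
    rw [mem_range] at hk
    rw [st15_L1 p m hp hm k (by omega)]
    have hsk : ((-1:R)^k) * ((-1:R)^k) = 1 := by
      rw [← pow_add, ← two_mul, pow_mul]; norm_num
    linear_combination (((m.choose k : ℕ) : R)^2*(1+2*(p:R)*Oz p k)^2)*hsk
      + (4*((m.choose k : ℕ) : R)^2*(Oz p k)^2)*hq
  rw [Finset.sum_congr rfl hsq, Finset.sum_add_distrib, ← Finset.mul_sum]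
  have hCsumR : (∑ k ∈ range (m+1), ((m.choose k : ℕ) : R)^2) = (((2*m).choose m : ℕ) : R) := by
    rw [← st15_vdm3 m]; push_cast [R]; rfl
  rw [hCsumR]
  have hcmR : (((2*m).choose m : ℕ) : R) = (-1:R)^m * (1 + 2*(p:R)*Oz p m) := by
    have h := st15_L1 p m hp hm m le_rfl
    rw [show m+m = 2*m from (by omega), Nat.choose_self] at h
    rw [h]
    push_cast
    ring
  set TR : R := ∑ k ∈ range (m+1), ((m.choose k : ℕ) : R)^2 * Oz p k with hTR
  have hz : (p:R) * (Oz p m + (-1:R)^m * TR) = 0 := by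
    rw [st15_key0 p hp]
    rw [map_add, st15_phiO p m hp hm m le_rfl, map_mul, map_pow, map_neg, map_one, hTR, map_sum]
    have : ∀ k ∈ range (m+1),
        ZMod.castHom (dvd_pow_self p two_ne_zero) (ZMod p) (((m.choose k : ℕ) : R)^2 * Oz p k)
        = ((m.choose k : ℕ) : ZMod p)^2 * OF p k := by
      intro k hk
      rw [mem_range] at hk
      rw [map_mul, map_pow, map_natCast, st15_phiO p m hp hm k (by omega)]
    rw [Finset.sum_congr rfl this]
    exact st15_F7 p m hp hm hp3
  rw [hcmR]
  have hs : ((-1:R)^m) * ((-1:R)^m) = 1 := by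
    rw [← pow_add, ← two_mul, pow_mul]; norm_num
  linear_combination 4*hz + (4*(Oz p m)^2 + 8*(-1:R)^m*TR*(Oz p m) + 8*(-1:R)^m*(Oz p m)*TR*0)*hq
    + ((1+2*(p:R)*Oz p m)^2 + 4*(p:R)*TR*(-1:R)^m*0)*hs

theorem stmt_15 (p : ℕ) (hp : p.Prime) (hp3 : 3 < p)
    (p' : ℕ) (hp' : p' = (p - 1) / 2) :
    ((p : ℤ)^2) ∣
      ((p - 1).choose p' : ℤ) * (∑ a ∈ Finset.Icc p' (p - 1), ((a.choose p' : ℤ))^2) - 1 := by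
  obtain ⟨m, hm⟩ : ∃ m, p = 2*m+1 := by
    obtain ⟨m, hm⟩ := hp.odd_of_ne_two (by omega)
    exact ⟨m, by omega⟩
  have hp'' : p' = m := by omega
  have hpm1 : p - 1 = 2*m := by omega
  subst hp''
  rw [hpm1]
  have hsum : (∑ a ∈ Finset.Icc p' (2*p'), ((a.choose p' : ℤ))^2)
      = ∑ k ∈ range (p'+1), (((p'+k).choose k : ℕ) : ℤ)^2 := by
    rw [← Finset.Ico_add_one_right_eq_Icc, Finset.sum_Ico_eq_sum_range,
      show 2*p'+1-p' = p'+1 from (by omega)]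
    refine Finset.sum_congr rfl fun k hk => ?_
    rw [mem_range] at hk
    congr 2
    rw [← Nat.choose_symm (by omega : p' ≤ p'+k), show p'+k-p' = k from (by omega)]
  rw [hsum]
  rw [show ((p:ℤ)^2) = ((p^2 : ℕ) : ℤ) from (by push_cast; ring)]
  rw [← ZMod.intCast_zmod_eq_zero_iff_dvd]
  push_cast
  rw [st15_main p p' hp hm hp3]
  ring
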